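/- Let m be a familial monad on c ⥤ Type (familial, with cartesian unit and multiplication), and let Θ_m be the full subcategory of the Eilenberg–Moore category of m spanned by the free algebras on the arities m[M]. The functor from cᵒᵖ to the Eilenberg–Moore category of m sending an object C to the free m-algebra on the representable copresheaf c(C, −), and a morphism f : C → C' in c to the free-algebra morphism induced by precomposition c(C', −) ⟶ c(C, −), is faithful; moreover each of its values is isomorphic to an object of Θ_m (namely the free algebra on the arity m[η(C)] of the unit operation, which is isomorphic to the representable at C). -/

import Mathlib

namespace Fam
open CategoryTheory Opposite Limits
private lemma sigmaExt {α : Type} {β : α → Type} {a a' : α} {b : β a} {b' : β a'}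
    (h : a = a') (h' : HEq b b') : (⟨a, b⟩ : Σ x, β x) = ⟨a', b'⟩ := by
  subst h; cases h'; rfl
variable {c d : Type} [SmallCategory c] [SmallCategory d]
def elHom (pos : c ⥤ Type) {C C' : c} (f : C ⟶ C') (I : pos.obj C) :
    pos.elementsMk C I ⟶ pos.elementsMk C' (pos.map f I) :=
  CategoryOfElements.homMk _ _ f rfl
lemma eqToHom_val {pos : c ⥤ Type} {x y : pos.Elements} (E : x = y) :
    (eqToHom E).val = eqToHom (congrArg Sigma.fst E) := by
  subst E; simp
@[simps]
def famApply (pos : c ⥤ Type) (ar : pos.Elementsᵒᵖ ⥤ d ⥤ Type) :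
    (d ⥤ Type) ⥤ c ⥤ Type where
  obj X :=
    { obj := fun C => Σ I : pos.obj C, ar.obj (op (pos.elementsMk C I)) ⟶ X
      map := fun {C C'} f => TypeCat.ofHom fun x => ⟨pos.map f x.1, ar.map (elHom pos f x.1).op ≫ x.2⟩
      map_id := by
        intro C
        refine ConcreteCategory.hom_ext _ _ fun x => ?_
        obtain ⟨I, g⟩ := x
        have h : pos.map (𝟙 C) I = I := by simp
        have hE : pos.elementsMk C I = pos.elementsMk C (pos.map (𝟙 C) I) := by rw [h]
        have he : elHom pos (𝟙 C) I = eqToHom hE := by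
          apply CategoryOfElements.ext
          rw [eqToHom_val]
          simp [elHom]
        dsimp
        refine sigmaExt h ?_
        rw [he]
        simp [eqToHom_op, eqToHom_map]
      map_comp := by
        intro C C' C'' f g
        refine ConcreteCategory.hom_ext _ _ fun x => ?_
        obtain ⟨I, u⟩ := x
        have h : pos.map (f ≫ g) I = pos.map g (pos.map f I) := by simp
        have hE : pos.elementsMk C'' (pos.map (f ≫ g) I)
            = pos.elementsMk C'' (pos.map g (pos.map f I)) := by rw [h]
        have hcomp : elHom pos f I ≫ elHom pos g (pos.map f I)
            = elHom pos (f ≫ g) I ≫ eqToHom hE := by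
          apply CategoryOfElements.ext
          rw [CategoryOfElements.comp_val, CategoryOfElements.comp_val, eqToHom_val]
          simp [elHom]
        dsimp
        refine sigmaExt h ?_
        rw [← Category.assoc, ← ar.map_comp, ← op_comp, hcomp, op_comp, ar.map_comp,
          Category.assoc]
        simp [eqToHom_op, eqToHom_map] }
  map {X Y} t :=
    { app := fun C => TypeCat.ofHom fun x => ⟨x.1, x.2 ≫ t⟩
      naturality := by
        intro C C' f
        refine ConcreteCategory.hom_ext _ _ fun x => ?_
        dsimp
        rw [Category.assoc] }
  map_id := by
    intro X
    apply NatTrans.ext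
    funext C
    refine ConcreteCategory.hom_ext _ _ fun x => ?_
    dsimp
    rw [Category.comp_id]
  map_comp := by
    intro X Y Z s t
    apply NatTrans.ext
    funext C
    refine ConcreteCategory.hom_ext _ _ fun x => ?_
    dsimp
    rw [Category.assoc]

/-- The unit exhibiting `famApply pos (ar ⋙ G)` as the right coclosure `⌈F/G⌉`,
i.e. the left Kan extension of the familial functor `F = famApply pos ar` along `G`. -/
def coclosureUnit {e : Type} [SmallCategory e] (pos : c ⥤ Type)
    (ar : pos.Elementsᵒᵖ ⥤ e ⥤ Type) (G : (e ⥤ Type) ⥤ d ⥤ Type) :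
    famApply pos ar ⟶ G ⋙ famApply pos (ar ⋙ G) where
  app X :=
    { app := fun C => TypeCat.ofHom fun x => ⟨x.1, G.map x.2⟩
      naturality := by
        intro C C' f
        refine ConcreteCategory.hom_ext _ _ fun x => ?_
        show (⟨pos.map f x.1, G.map (ar.map (elHom pos f x.1).op ≫ x.2)⟩ :
            Σ I : pos.obj C', (ar ⋙ G).obj (op (pos.elementsMk C' I)) ⟶ G.obj X)
          = ⟨pos.map f x.1, G.map (ar.map (elHom pos f x.1).op) ≫ G.map x.2⟩
        rw [G.map_comp] }
  naturality := by
    intro X Y t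
    apply NatTrans.ext
    funext C
    refine ConcreteCategory.hom_ext _ _ fun x => ?_
    show (⟨x.1, G.map (x.2 ≫ t)⟩ :
        Σ I : pos.obj C, (ar ⋙ G).obj (op (pos.elementsMk C I)) ⟶ G.obj Y)
      = ⟨x.1, G.map x.2 ≫ G.map t⟩
    rw [G.map_comp]

section Statement14

variable {c : Type} [SmallCategory c]
  (m : Monad (c ⥤ Type)) {posm : c ⥤ Type} (arm : posm.Elementsᵒᵖ ⥤ c ⥤ Type)

/-- The free `m`-algebra on the arity of the operation `M`. -/
def theoryObj (M : posm.Elements) : m.Algebra :=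
  m.free.obj (arm.obj (op M))

/-- The theory category `Θ_m`. -/
def Theta : Type :=
  InducedCategory m.Algebra (theoryObj m arm)

instance : Category (Theta m arm) :=
  InducedCategory.instCategory

/-- The inclusion `Θ_m ⥤ m-Alg`. -/
def thetaIncl : Theta m arm ⥤ m.Algebra :=
  inducedFunctor (theoryObj m arm)

/-- The terminal copresheaf on `c`. -/
def termPSh : c ⥤ Type := (Functor.const c).obj PUnit

variable (em : famApply posm arm ≅ (m : (c ⥤ Type) ⥤ c ⥤ Type))

/-- The unit operation `η(C) ∈ m(1)(C)`. -/
def unitOp (C : c) : posm.obj C :=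
  ((em.inv.app (termPSh)).app C ((m.η.app (termPSh)).app C PUnit.unit)).1

/-- The unit operation at `C`, as an object of `Θ_m`. -/
def unitObj (C : c) : Theta m arm :=
  posm.elementsMk C (unitOp m arm em C)

/-! ### Auxiliary material for Statement 14 -/

/-- The unique map to the terminal copresheaf. -/
def toTerm (X : c ⥤ Type) : X ⟶ termPSh (c := c) where
  app _ := TypeCat.ofHom fun _ => PUnit.unit

lemma toTerm_unique {X : c ⥤ Type} (f g : X ⟶ termPSh (c := c)) : f = g := by
  apply NatTrans.ext
  funext D
  refine ConcreteCategory.hom_ext _ _ fun x => ?_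
  exact Subsingleton.elim (α := PUnit) _ _

/-- An isomorphism between two corepresenting objects of the same functor. -/
def corepIso {C' : Type*} [Category C'] {F : C' ⥤ Type*} {X Y : C'}
    (e1 : F.CorepresentableBy X) (e2 : F.CorepresentableBy Y) : X ≅ Y where
  hom := e1.homEquiv.symm (e2.homEquiv (𝟙 Y))
  inv := e2.homEquiv.symm (e1.homEquiv (𝟙 X))
  hom_inv_id := by
    apply e1.homEquiv.injective
    rw [e1.homEquiv_comp, Equiv.apply_symm_apply, ← e2.homEquiv_comp, Category.id_comp,
      Equiv.apply_symm_apply]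
  inv_hom_id := by
    apply e2.homEquiv.injective
    rw [e2.homEquiv_comp, Equiv.apply_symm_apply, ← e1.homEquiv_comp, Category.id_comp,
      Equiv.apply_symm_apply]

/-- Pointwise naturality for a natural transformation between endofunctors of `c ⥤ Type`. -/
lemma nat_app {F G : (c ⥤ Type) ⥤ c ⥤ Type} (α : F ⟶ G) {X Y : c ⥤ Type} (f : X ⟶ Y)
    (D : c) (z : (F.obj X).obj D) :
    (α.app Y).app D ((F.map f).app D z) = (G.map f).app D ((α.app X).app D z) := by
  have h := ConcreteCategory.congr_hom (NatTrans.congr_app (α.naturality f) D) z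
  simp only [NatTrans.comp_app, types_comp_apply] at h
  exact h

/-- Pointwise naturality of the unit of the monad. -/
lemma eta_nat {X Y : c ⥤ Type} (f : X ⟶ Y) (D : c) (x : X.obj D) :
    (m.η.app Y).app D (f.app D x)
      = ((m : (c ⥤ Type) ⥤ c ⥤ Type).map f).app D ((m.η.app X).app D x) := by
  simpa using ConcreteCategory.congr_hom (NatTrans.congr_app (m.η.naturality f) D) x

/-- The unit is pointwise injective, by cartesianness over the terminal copresheaf. -/
lemma etaInj
    (hU : ∀ {X Y : c ⥤ Type} (f : X ⟶ Y),
      IsPullback f (m.η.app X) (m.η.app Y) ((m : (c ⥤ Type) ⥤ c ⥤ Type).map f))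
    (X : c ⥤ Type) (D : c) {x y : X.obj D}
    (h : (m.η.app X).app D x = (m.η.app X).app D y) : x = y := by
  have hpb := hU (toTerm X)
  have ha : coyonedaEquiv.symm x ≫ m.η.app X = coyonedaEquiv.symm y ≫ m.η.app X := by
    apply coyonedaEquiv.injective
    rw [coyonedaEquiv_comp, coyonedaEquiv_comp, Equiv.apply_symm_apply,
      Equiv.apply_symm_apply, h]
  have hb := hpb.hom_ext (toTerm_unique _ _) ha
  exact coyonedaEquiv.symm.injective hb

/-- The first component of the familial decomposition of a unit element is the unit
operation. -/
lemma fst_eta (X : c ⥤ Type) (C : c) (x : X.obj C) :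
    ((em.inv.app X).app C ((m.η.app X).app C x)).1 = unitOp m arm em C := by
  have h1 : ((m : (c ⥤ Type) ⥤ c ⥤ Type).map (toTerm X)).app C ((m.η.app X).app C x)
      = (m.η.app (termPSh (c := c))).app C PUnit.unit := by
    have := eta_nat m (toTerm X) C x
    exact this.symm
  have h2 := nat_app em.inv (toTerm X) C ((m.η.app X).app C x)
  calc ((em.inv.app X).app C ((m.η.app X).app C x)).1
      = (((famApply posm arm).map (toTerm X)).app C
          ((em.inv.app X).app C ((m.η.app X).app C x))).1 := rfl
    _ = ((em.inv.app (termPSh (c := c))).app C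
          (((m : (c ⥤ Type) ⥤ c ⥤ Type).map (toTerm X)).app C
            ((m.η.app X).app C x))).1 := by rw [h2]
    _ = ((em.inv.app (termPSh (c := c))).app C
          ((m.η.app (termPSh (c := c))).app C PUnit.unit)).1 := by rw [h1]
    _ = unitOp m arm em C := rfl

/-- The element of `m(X)(C)` corresponding to an operation `unitOp C` with arity map `u`. -/
def emElt (C : c) {X : c ⥤ Type}
    (u : arm.obj (op (posm.elementsMk C (unitOp m arm em C))) ⟶ X) :
    ((m : (c ⥤ Type) ⥤ c ⥤ Type).obj X).obj C :=
  (em.hom.app X).app C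
    (⟨unitOp m arm em C, u⟩ : Σ I : posm.obj C, arm.obj (op (posm.elementsMk C I)) ⟶ X)

lemma map_toTerm_emElt (C : c) {X : c ⥤ Type}
    (u : arm.obj (op (posm.elementsMk C (unitOp m arm em C))) ⟶ X) :
    ((m : (c ⥤ Type) ⥤ c ⥤ Type).map (toTerm X)).app C (emElt m arm em C u)
      = (m.η.app (termPSh (c := c))).app C PUnit.unit := by
  have h2 := nat_app em.hom (toTerm X) C
    (⟨unitOp m arm em C, u⟩ : Σ I : posm.obj C, arm.obj (op (posm.elementsMk C I)) ⟶ X)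
  -- rewrite the left side of h2
  have h3 : (((famApply posm arm).map (toTerm X)).app C
      (⟨unitOp m arm em C, u⟩ : Σ I : posm.obj C, arm.obj (op (posm.elementsMk C I)) ⟶ X))
      = (⟨unitOp m arm em C, u ≫ toTerm X⟩ :
          Σ I : posm.obj C, arm.obj (op (posm.elementsMk C I)) ⟶ termPSh (c := c)) := rfl
  set q := (em.inv.app (termPSh (c := c))).app C
    ((m.η.app (termPSh (c := c))).app C PUnit.unit) with hq
  have h4 : (⟨unitOp m arm em C, u ≫ toTerm X⟩ :
      Σ I : posm.obj C, arm.obj (op (posm.elementsMk C I)) ⟶ termPSh (c := c)) = q := by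
    have h5 : u ≫ toTerm X = q.2 := toTerm_unique _ _
    rw [h5]; rfl
  have h6 : (em.hom.app (termPSh (c := c))).app C q
      = (m.η.app (termPSh (c := c))).app C PUnit.unit := by
    rw [hq]
    exact ConcreteCategory.congr_hom (NatTrans.congr_app (em.inv_hom_id_app (termPSh (c := c))) C) _
  calc ((m : (c ⥤ Type) ⥤ c ⥤ Type).map (toTerm X)).app C (emElt m arm em C u)
      = (em.hom.app (termPSh (c := c))).app C
          (((famApply posm arm).map (toTerm X)).app C
            (⟨unitOp m arm em C, u⟩ :
              Σ I : posm.obj C, arm.obj (op (posm.elementsMk C I)) ⟶ X)) := (h2).symm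
    _ = (em.hom.app (termPSh (c := c))).app C q := by rw [h3, h4]
    _ = (m.η.app (termPSh (c := c))).app C PUnit.unit := h6

/-- The transpose of `u : m[η(C)] ⟶ X`: the unique element `x ∈ X(C)` whose unit image is the
operation `η(C)` filled with `u`. -/
lemma phiw
    (C : c) {X : c ⥤ Type}
    (u : arm.obj (op (posm.elementsMk C (unitOp m arm em C))) ⟶ X) :
    toTerm (coyoneda.obj (op C)) ≫ m.η.app (termPSh (c := c))
      = coyonedaEquiv.symm (emElt m arm em C u)
          ≫ (m : (c ⥤ Type) ⥤ c ⥤ Type).map (toTerm X) := by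
  apply coyonedaEquiv.injective
  rw [coyonedaEquiv_comp, coyonedaEquiv_comp, Equiv.apply_symm_apply]
  have hx : coyonedaEquiv (toTerm (coyoneda.obj (op C)))
      = (toTerm (coyoneda.obj (op C))).app C (𝟙 C) := coyonedaEquiv_apply _
  rw [hx]
  exact (map_toTerm_emElt m arm em C u).symm

/-- The lift through the unit pullback square. -/
noncomputable def philift
    (hU : ∀ {X Y : c ⥤ Type} (f : X ⟶ Y),
      IsPullback f (m.η.app X) (m.η.app Y) ((m : (c ⥤ Type) ⥤ c ⥤ Type).map f))
    (C : c) {X : c ⥤ Type}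
    (u : arm.obj (op (posm.elementsMk C (unitOp m arm em C))) ⟶ X) :
    coyoneda.obj (op C) ⟶ X :=
  (hU (toTerm X)).lift (toTerm (coyoneda.obj (op C)))
    (coyonedaEquiv.symm (emElt m arm em C u)) (phiw m arm em C u)

lemma philift_snd
    (hU : ∀ {X Y : c ⥤ Type} (f : X ⟶ Y),
      IsPullback f (m.η.app X) (m.η.app Y) ((m : (c ⥤ Type) ⥤ c ⥤ Type).map f))
    (C : c) {X : c ⥤ Type}
    (u : arm.obj (op (posm.elementsMk C (unitOp m arm em C))) ⟶ X) :
    philift m arm em hU C u ≫ m.η.app X = coyonedaEquiv.symm (emElt m arm em C u) :=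
  (hU (toTerm X)).lift_snd _ _ _

noncomputable def phi
    (hU : ∀ {X Y : c ⥤ Type} (f : X ⟶ Y),
      IsPullback f (m.η.app X) (m.η.app Y) ((m : (c ⥤ Type) ⥤ c ⥤ Type).map f))
    (C : c) {X : c ⥤ Type}
    (u : arm.obj (op (posm.elementsMk C (unitOp m arm em C))) ⟶ X) : X.obj C :=
  coyonedaEquiv (philift m arm em hU C u)

lemma eta_phi
    (hU : ∀ {X Y : c ⥤ Type} (f : X ⟶ Y),
      IsPullback f (m.η.app X) (m.η.app Y) ((m : (c ⥤ Type) ⥤ c ⥤ Type).map f))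
    (C : c) {X : c ⥤ Type}
    (u : arm.obj (op (posm.elementsMk C (unitOp m arm em C))) ⟶ X) :
    (m.η.app X).app C (phi m arm em hU C u) = emElt m arm em C u :=
  calc (m.η.app X).app C (phi m arm em hU C u)
      = coyonedaEquiv (philift m arm em hU C u ≫ m.η.app X) :=
        (coyonedaEquiv_comp _ _).symm
    _ = coyonedaEquiv (coyonedaEquiv.symm (emElt m arm em C u)) := by
        rw [philift_snd]
    _ = emElt m arm em C u := Equiv.apply_symm_apply _ _

/-- `m[η(C)]` corepresents evaluation at `C`. -/
noncomputable def corepAux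
    (hU : ∀ {X Y : c ⥤ Type} (f : X ⟶ Y),
      IsPullback f (m.η.app X) (m.η.app Y) ((m : (c ⥤ Type) ⥤ c ⥤ Type).map f))
    (C : c) :
    ((evaluation c Type).obj C).CorepresentableBy
      (arm.obj (op (posm.elementsMk C (unitOp m arm em C)))) where
  homEquiv {X} := Equiv.ofBijective (phi m arm em hU C) (by
    constructor
    · intro u u' h
      have h1 : emElt m arm em C u = emElt m arm em C u' := by
        rw [← eta_phi m arm em hU C u, ← eta_phi m arm em hU C u', h]
      have h2 : (⟨unitOp m arm em C, u⟩ :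
            Σ I : posm.obj C, arm.obj (op (posm.elementsMk C I)) ⟶ X)
          = ⟨unitOp m arm em C, u'⟩ := by
        have h3 := congrArg ((em.inv.app X).app C) h1
        have h4 := ConcreteCategory.congr_hom (NatTrans.congr_app (em.hom_inv_id_app X) C)
          (⟨unitOp m arm em C, u⟩ :
            Σ I : posm.obj C, arm.obj (op (posm.elementsMk C I)) ⟶ X)
        have h5 := ConcreteCategory.congr_hom (NatTrans.congr_app (em.hom_inv_id_app X) C)
          (⟨unitOp m arm em C, u'⟩ :
            Σ I : posm.obj C, arm.obj (op (posm.elementsMk C I)) ⟶ X)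
        simp only [NatTrans.comp_app, types_comp_apply, NatTrans.id_app, types_id_apply,
          comp_apply, id_apply] at h4 h5
        exact h4.symm.trans (h3.trans h5)
      exact eq_of_heq (congr_arg_heq (fun p => p.2) h2)
    · intro x
      set s := (em.inv.app X).app C ((m.η.app X).app C x) with hs
      have hf : s.1 = unitOp m arm em C := fst_eta m arm em X C x
      refine ⟨cast (by rw [hf]) s.2, ?_⟩
      apply etaInj m hU X C
      rw [eta_phi]
      have h2 : (⟨unitOp m arm em C, cast (by rw [hf]) s.2⟩ :
          Σ I : posm.obj C, arm.obj (op (posm.elementsMk C I)) ⟶ X) = ⟨s.1, s.2⟩ :=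
        sigmaExt hf.symm (cast_heq _ _)
      have h3 : (⟨s.1, s.2⟩ :
          Σ I : posm.obj C, arm.obj (op (posm.elementsMk C I)) ⟶ X) = s := rfl
      have h4 := ConcreteCategory.congr_hom (NatTrans.congr_app (em.inv_hom_id_app X) C)
        ((m.η.app X).app C x)
      simp only [NatTrans.comp_app, types_comp_apply, NatTrans.id_app, types_id_apply,
          comp_apply, id_apply] at h4
      calc emElt m arm em C (cast (by rw [hf]) s.2)
          = (em.hom.app X).app C s := by rw [emElt, h2, h3]
        _ = (m.η.app X).app C x := by rw [hs]; exact h4)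
  homEquiv_comp {Y Y'} t u := by
    show phi m arm em hU C (u ≫ t) = t.app C (phi m arm em hU C u)
    apply etaInj m hU Y' C
    rw [eta_phi]
    have h1 := eta_nat m t C (phi m arm em hU C u)
    rw [eta_phi] at h1
    rw [h1]
    have h2 := nat_app em.hom t C
      (⟨unitOp m arm em C, u⟩ : Σ I : posm.obj C, arm.obj (op (posm.elementsMk C I)) ⟶ Y)
    have h3 : (((famApply posm arm).map t).app C
        (⟨unitOp m arm em C, u⟩ : Σ I : posm.obj C, arm.obj (op (posm.elementsMk C I)) ⟶ Y))
        = (⟨unitOp m arm em C, u ≫ t⟩ :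
            Σ I : posm.obj C, arm.obj (op (posm.elementsMk C I)) ⟶ Y') := rfl
    calc emElt m arm em C (u ≫ t)
        = (em.hom.app Y').app C (((famApply posm arm).map t).app C
            (⟨unitOp m arm em C, u⟩ :
              Σ I : posm.obj C, arm.obj (op (posm.elementsMk C I)) ⟶ Y)) := by rw [h3]; rfl
      _ = ((m : (c ⥤ Type) ⥤ c ⥤ Type).map t).app C (emElt m arm em C u) := h2

/-- The functor `cᵒᵖ ⥤ m-Alg` sending `C` to the free `m`-algebra on the
representable copresheaf `c(C, −)` (and a morphism of `c` to the free-algebra map induced by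
precomposition), namely `coyoneda ⋙ m.free`, is faithful, and each of its values is
isomorphic to an object of `Θ_m` — the free algebra on the arity `m[η(C)]` of the unit
operation, that arity being isomorphic to the representable at `C`. -/
theorem cop_embeds_in_theory
    (hUnitCartesian : ∀ {X Y : c ⥤ Type} (f : X ⟶ Y),
      IsPullback f (m.η.app X) (m.η.app Y) ((m : (c ⥤ Type) ⥤ c ⥤ Type).map f))
    (hMultCartesian : ∀ {X Y : c ⥤ Type} (f : X ⟶ Y),
      IsPullback ((m : (c ⥤ Type) ⥤ c ⥤ Type).map ((m : (c ⥤ Type) ⥤ c ⥤ Type).map f))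
        (m.μ.app X) (m.μ.app Y) ((m : (c ⥤ Type) ⥤ c ⥤ Type).map f)) :
    (coyoneda ⋙ m.free).Faithful ∧
    ∀ C : c, Nonempty ((coyoneda ⋙ m.free).obj (op C) ≅
      (thetaIncl m arm).obj (unitObj m arm em C)) := by
  constructor
  · constructor
    intro X Y s t h
    have hf : (m : (c ⥤ Type) ⥤ c ⥤ Type).map (coyoneda.map s)
        = (m : (c ⥤ Type) ⥤ c ⥤ Type).map (coyoneda.map t) :=
      congrArg Monad.Algebra.Hom.f h
    have hc : coyoneda.map s = coyoneda.map t := by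
      apply NatTrans.ext
      funext D
      refine ConcreteCategory.hom_ext _ _ fun g => ?_
      apply etaInj m hUnitCartesian (coyoneda.obj Y) D
      have h1 := eta_nat m (coyoneda.map s) D g
      have h2 := eta_nat m (coyoneda.map t) D g
      rw [h1, h2, hf]
    exact coyoneda.map_injective hc
  · intro C
    let e1 : ((evaluation c Type).obj C).CorepresentableBy (coyoneda.obj (op C)) :=
      { homEquiv := coyonedaEquiv
        homEquiv_comp := fun g f => coyonedaEquiv_comp f g }
    exact ⟨m.free.mapIso (corepIso e1 (corepAux m arm em hUnitCartesian C))⟩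

end Statement14

end Fam
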